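/- Fix a real v > 0 and a real s with |s| < 1, and for each integer n ≥ 1 let L_n(v) = ∫_{Q_{t_n}} exp(-v·(x_1 + ⋯ + x_n)) dx with respect to Lebesgue measure on ℝ^n. Then the series ∑_{n ≥ 1} L_n(v) s^n converges, with sum equal to (1/v)·( s/( (e^{-v}/v)·s - s/v + 1 ) + e^{-v} s/( e^{-v} s - 1 ) ); equivalently, the sum equals s/(v - (1 - e^{-v})s) - e^{-v} s/( v (1 - e^{-v} s) ). -/

import Mathlib

open MeasureTheory

/-- The arbor polytope `Q_{t_n} ⊆ ℝ^n`: points `x` with `x i ≥ 0` for all `i`,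
`x i ≤ 1` for the first `n - 1` coordinates, and `x 1 + ⋯ + x n ≤ n`. -/
def Qtn (n : ℕ) : Set (Fin n → ℝ) :=
  {x | (∀ i, 0 ≤ x i) ∧ (∀ i : Fin n, (i : ℕ) < n - 1 → x i ≤ 1) ∧ ∑ i, x i ≤ n}

/-- The Laplace transform `L_n(v)` of the volume function of `Q_{t_n}`:
the integral of `exp(-v (x₁ + ⋯ + xₙ))` over `Q_{t_n}` with respect to Lebesgue measure. -/
noncomputable def Ltn (n : ℕ) (v : ℝ) : ℝ :=
  ∫ x in Qtn n, Real.exp (-v * ∑ i, x i)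

lemma exp_int (v S a : ℝ) (hv : 0 < v) (ha : 0 ≤ a) :
    ∫ t in Set.Icc 0 a, Real.exp (-v * (t + S)) =
      (Real.exp (-v * S) - Real.exp (-v * (a + S))) / v := by
  rw [MeasureTheory.integral_Icc_eq_integral_Ioc, ← intervalIntegral.integral_of_le ha]
  have hd : ∀ x ∈ Set.uIcc (0:ℝ) a,
      HasDerivAt (fun t => -(Real.exp (-v*(t+S))/v)) (Real.exp (-v*(x+S))) x := by
    intro x _
    have h1 : HasDerivAt (fun t : ℝ => -v*(t+S)) (-v) x := by
      simpa using ((hasDerivAt_id x).add_const S).const_mul (-v)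
    have h2 := (h1.exp.div_const v).neg
    convert h2 using 1
    · rfl
    · rfl
    · rfl
    rw [mul_neg, neg_div, neg_neg, mul_div_assoc, div_self (ne_of_gt hv), mul_one]
  rw [intervalIntegral.integral_eq_sub_of_hasDerivAt hd
    (Continuous.intervalIntegrable (by continuity) 0 a)]
  ring_nf

lemma Ltn_succ (n : ℕ) {v : ℝ} (hv : 0 < v) :
    Ltn (n+1) v = (1 - Real.exp (-v))^n / v^(n+1) - Real.exp (-v)^(n+1) / v := by
  classical
  have hvne : v ≠ 0 := ne_of_gt hv
  set c : ℝ := (n : ℝ) + 1 with hc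
  set B : Set (Fin n → ℝ) := Set.pi Set.univ (fun _ => Set.Icc 0 1) with hB
  set S' : Set (ℝ × (Fin n → ℝ)) :=
    {p | p.2 ∈ B ∧ p.1 ∈ Set.Icc 0 (c - ∑ i, p.2 i)} with hS'
  set g : ℝ × (Fin n → ℝ) → ℝ := fun p => Real.exp (-v * (p.1 + ∑ i, p.2 i)) with hg
  have hBmeas : MeasurableSet B := MeasurableSet.univ_pi fun _ => measurableSet_Icc
  have hS'meas : MeasurableSet S' := by
    apply MeasurableSet.inter
    · exact measurable_snd hBmeas
    · apply MeasurableSet.inter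
      · exact measurableSet_le measurable_const measurable_fst
      · exact measurableSet_le measurable_fst (by fun_prop)
  set e := MeasurableEquiv.piFinSuccAbove (fun _ : Fin (n+1) => ℝ) (Fin.last n) with hee
  have he : ∀ p : ℝ × (Fin n → ℝ), e.symm p = Fin.snoc p.2 p.1 := by
    intro p
    simp [hee, MeasurableEquiv.piFinSuccAbove_symm_apply, Fin.insertNthEquiv,
      Fin.insertNth_last']
  have hsum : ∀ p : ℝ × (Fin n → ℝ), ∑ i, (e.symm p) i = p.1 + ∑ i, p.2 i := by
    intro p
    rw [he p, Fin.sum_univ_castSucc]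
    simp [add_comm]
  have hpre : e.symm ⁻¹' Qtn (n+1) = S' := by
    ext ⟨t, y⟩
    simp only [Set.mem_preimage, Qtn, Set.mem_setOf_eq, he, hS', hB, Set.mem_pi,
      Set.mem_univ, forall_true_left, Set.mem_Icc, Fin.sum_univ_castSucc,
      Fin.snoc_castSucc, Fin.snoc_last, Nat.add_sub_cancel]
    push_cast
    constructor
    · rintro ⟨h0, h1, hs⟩
      refine ⟨fun j => ⟨by simpa using h0 j.castSucc,
        by simpa using h1 j.castSucc (by simpa using j.isLt)⟩,
        by simpa using h0 (Fin.last n), by linarith⟩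
    · rintro ⟨hy, ht0, ht1⟩
      refine ⟨fun i => ?_, fun i hi => ?_, by linarith⟩
      · induction i using Fin.lastCases with
        | last => simpa using ht0
        | cast j => simpa using (hy j).1
      · induction i using Fin.lastCases with
        | last => simp at hi
        | cast j => simpa using (hy j).2
  have hmp : MeasurePreserving e.symm :=
    (volume_preserving_piFinSuccAbove (fun _ : Fin (n+1) => ℝ) (Fin.last n)).symm
  have key : Ltn (n+1) v = ∫ p in S', g p := by
    rw [Ltn, ← hmp.setIntegral_preimage_emb (MeasurableEquiv.measurableEmbedding _)
      (fun x => Real.exp (-v * ∑ i, x i)) (Qtn (n+1)), hpre]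
    simp only [hsum, hg]
  -- integrability
  have hgcont : Continuous g := by
    apply Real.continuous_exp.comp
    apply Continuous.mul continuous_const
    exact continuous_fst.add (continuous_finset_sum _ fun i _ => (continuous_apply i).comp continuous_snd)
  have hK : IsCompact (Set.Icc (0:ℝ) c ×ˢ B) :=
    isCompact_Icc.prod (isCompact_univ_pi fun _ => isCompact_Icc)
  have hsub : S' ⊆ Set.Icc 0 c ×ˢ B := by
    rintro ⟨t, y⟩ ⟨hy, ht0, ht1⟩
    have h0 : 0 ≤ ∑ i, y i :=
      Finset.sum_nonneg fun i _ => (hy i (Set.mem_univ i)).1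
    exact ⟨⟨ht0, by linarith⟩, hy⟩
  have hint : IntegrableOn g S' volume :=
    (hgcont.continuousOn.integrableOn_compact hK).mono_set hsub
  have hindint : Integrable (S'.indicator g) ((volume : Measure ℝ).prod volume) := by
    rw [← MeasureTheory.Measure.volume_eq_prod]
    exact (integrable_indicator_iff hS'meas).2 hint
  have hinner : ∀ y : Fin n → ℝ, (∫ t, S'.indicator g (t, y)) =
      B.indicator (fun y => (Real.exp (-v * ∑ i, y i) - Real.exp (-v * c)) / v) y := by
    intro y
    by_cases hy : y ∈ B
    · have h1 : (fun t => S'.indicator g (t, y)) =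
          (Set.Icc 0 (c - ∑ i, y i)).indicator (fun t => Real.exp (-v * (t + ∑ i, y i))) := by
        ext t
        by_cases ht : t ∈ Set.Icc (0:ℝ) (c - ∑ i, y i)
        · rw [Set.indicator_of_mem ht, Set.indicator_of_mem (by exact ⟨hy, ht⟩)]
        · rw [Set.indicator_of_notMem ht, Set.indicator_of_notMem (by
            intro h; exact ht h.2)]
      rw [h1, integral_indicator measurableSet_Icc]
      have hle : ∑ i, y i ≤ (n:ℝ) := by
        calc ∑ i, y i ≤ ∑ _i : Fin n, (1:ℝ) :=
          Finset.sum_le_sum fun i _ => (hy i (Set.mem_univ i)).2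
        _ = n := by simp
      have hnn : (0:ℝ) ≤ c - ∑ i, y i := by rw [hc]; linarith
      rw [exp_int v _ _ hv hnn, Set.indicator_of_mem hy]
      congr 2
      ring
    · have h1 : (fun t => S'.indicator g (t, y)) = fun _ => (0:ℝ) := by
        ext t
        exact Set.indicator_of_notMem (fun h => hy h.1) _
      rw [h1, integral_zero, Set.indicator_of_notMem hy]
  set φ : ℝ → ℝ := (Set.Icc (0:ℝ) 1).indicator (fun t => Real.exp (-v * t)) with hφdef
  set ψ : ℝ → ℝ := (Set.Icc (0:ℝ) 1).indicator (fun _ => (1:ℝ)) with hψdef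
  have houter : ∀ y : Fin n → ℝ,
      B.indicator (fun y => (Real.exp (-v * ∑ i, y i) - Real.exp (-v * c)) / v) y =
      (1/v) * ∏ i, φ (y i) - (Real.exp (-v * c)/v) * ∏ i, ψ (y i) := by
    intro y
    by_cases hy : y ∈ B
    · rw [Set.indicator_of_mem hy]
      have h2 : ∀ i, φ (y i) = Real.exp (-v * y i) :=
        fun i => Set.indicator_of_mem (hy i (Set.mem_univ i)) _
      have h3 : ∀ i, ψ (y i) = 1 :=
        fun i => Set.indicator_of_mem (hy i (Set.mem_univ i)) _
      simp only [h2, h3, Finset.prod_const_one, mul_one]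
      rw [← Real.exp_sum]
      rw [show ∑ i, -v * y i = -v * ∑ i, y i by rw [Finset.mul_sum]]
      ring
    · rw [Set.indicator_of_notMem hy]
      rw [hB, Set.mem_pi] at hy
      push_neg at hy
      obtain ⟨i, _, hi⟩ := hy
      rw [Finset.prod_eq_zero (Finset.mem_univ i) (Set.indicator_of_notMem hi _),
        Finset.prod_eq_zero (Finset.mem_univ i) (Set.indicator_of_notMem hi _)]
      ring
  have hφint : Integrable φ := by
    rw [hφdef, integrable_indicator_iff measurableSet_Icc]
    exact (Real.continuous_exp.comp (continuous_const.mul continuous_id)).integrableOn_Icc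
  have hψint : Integrable ψ := by
    rw [hψdef, integrable_indicator_iff measurableSet_Icc]
    exact continuous_const.integrableOn_Icc
  have hφval : (∫ t, φ t) = (1 - Real.exp (-v)) / v := by
    rw [hφdef, integral_indicator measurableSet_Icc]
    have := exp_int v 0 1 hv zero_le_one
    simpa using this
  have hψval : (∫ t, ψ t) = 1 := by
    rw [hψdef, integral_indicator measurableSet_Icc]
    simp [Real.volume_Icc]
  have hexpc : Real.exp (-v * c) = Real.exp (-v) ^ (n+1) := by
    rw [show -v * c = ((n+1 : ℕ) : ℝ) * (-v) by rw [hc]; push_cast; ring,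
      Real.exp_nat_mul]
  calc Ltn (n+1) v = ∫ p in S', g p := key
    _ = ∫ p, S'.indicator g p ∂((volume : Measure ℝ).prod volume) := by
        rw [← MeasureTheory.Measure.volume_eq_prod, integral_indicator hS'meas]
    _ = ∫ y, ∫ t, S'.indicator g (t, y) := integral_prod_symm _ hindint
    _ = ∫ y : Fin n → ℝ, ((1/v) * ∏ i, φ (y i) - (Real.exp (-v * c)/v) * ∏ i, ψ (y i)) := by
        simp only [hinner, houter]
    _ = (1/v) * (∫ t, φ t)^n - (Real.exp (-v * c)/v) * (∫ t, ψ t)^n := by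
        rw [MeasureTheory.volume_pi]
        rw [integral_sub ((Integrable.fintype_prod (fun _ => hφint)).const_mul _)
          ((Integrable.fintype_prod (fun _ => hψint)).const_mul _),
          integral_const_mul, integral_const_mul,
          MeasureTheory.integral_fintype_prod_eq_pow (ι := Fin n) φ,
          MeasureTheory.integral_fintype_prod_eq_pow (ι := Fin n) ψ]
        simp
    _ = (1 - Real.exp (-v))^n / v^(n+1) - Real.exp (-v)^(n+1) / v := by
        rw [hφval, hψval, hexpc, div_pow, one_pow, mul_one]
        rw [pow_succ]
        field_simp
        ring

/-- Fix a real `v > 0` and a real `s` with `|s| < 1`. Then the series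
`∑_{n ≥ 1} L_n(v) sⁿ` converges, with sum equal to
`(1/v)(s/((e^{-v}/v)s - s/v + 1) + e^{-v}s/(e^{-v}s - 1))`; equivalently, the sum equals
`s/(v - (1 - e^{-v})s) - e^{-v}s/(v(1 - e^{-v}s))`. -/
theorem stmt13 (v s : ℝ) (hv : 0 < v) (hs : |s| < 1) :
    HasSum (fun n : ℕ => Ltn (n + 1) v * s ^ (n + 1))
      ((1 / v) * (s / ((Real.exp (-v) / v) * s - s / v + 1) +
        Real.exp (-v) * s / (Real.exp (-v) * s - 1))) ∧
    (1 / v) * (s / ((Real.exp (-v) / v) * s - s / v + 1) +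
        Real.exp (-v) * s / (Real.exp (-v) * s - 1)) =
      s / (v - (1 - Real.exp (-v)) * s) -
        Real.exp (-v) * s / (v * (1 - Real.exp (-v) * s)) := by
  have hvne : v ≠ 0 := ne_of_gt hv
  set q := Real.exp (-v) with hq
  have hq0 : 0 < q := Real.exp_pos _
  have hq1 : q < 1 := by
    rw [hq, Real.exp_lt_one_iff]; linarith
  set A := 1 - q with hA
  have hA0 : 0 < A := by simp [hA]; linarith
  have hAv : A < v := by
    have := Real.add_one_lt_exp (x := -v) (by linarith)
    simp [hA]; linarith
  have hs0 : 0 ≤ |s| := abs_nonneg s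
  have hAs : |A * s / v| < 1 := by
    rw [abs_div, abs_mul, abs_of_pos hA0, abs_of_pos hv, div_lt_one hv]
    calc A * |s| ≤ A * 1 := by nlinarith
    _ = A := mul_one A
    _ < v := hAv
  have hqs : |q * s| < 1 := by
    rw [abs_mul, abs_of_pos hq0]
    nlinarith
  -- nonzeroness of denominators
  have hD1 : (0:ℝ) < 1 - A * s / v := by
    have := neg_abs_le (A * s / v)
    have := abs_nonneg (A * s / v)
    nlinarith [le_abs_self (A * s / v)]
  have hD2 : (0:ℝ) < 1 - q * s := by nlinarith [le_abs_self (q * s)]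
  have hD3 : v - A * s > 0 := by
    have h1 : A * s ≤ |A * s| := le_abs_self _
    have h2 : |A * s| = A * |s| := by rw [abs_mul, abs_of_pos hA0]
    nlinarith
  have hDen : (q / v) * s - s / v + 1 ≠ 0 := by
    have : (q / v) * s - s / v + 1 = 1 - A * s / v := by field_simp; ring
    rw [this]; linarith
  -- geometric series
  have G1 : HasSum (fun k : ℕ => (s / v) * (A * s / v) ^ k) ((s / v) * (1 - A * s / v)⁻¹) :=
    (hasSum_geometric_of_norm_lt_one (ξ := A * s / v) (by rwa [Real.norm_eq_abs])).mul_left _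
  have G2 : HasSum (fun k : ℕ => (1 / v) * ((q * s) * (q * s) ^ k))
      ((1 / v) * ((q * s) * (1 - q * s)⁻¹)) :=
    ((hasSum_geometric_of_norm_lt_one (ξ := q * s) (by rwa [Real.norm_eq_abs])).mul_left (q * s)).mul_left _
  have hfun : ∀ k : ℕ, Ltn (k + 1) v * s ^ (k + 1) =
      (s / v) * (A * s / v) ^ k - (1 / v) * ((q * s) * (q * s) ^ k) := by
    intro k
    rw [Ltn_succ k hv, ← hq, ← hA, div_pow, mul_pow, mul_pow]
    have hvk : (v : ℝ) ^ k ≠ 0 := pow_ne_zero _ hvne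
    field_simp
    ring
  have e1 : q * s - 1 ≠ 0 := by nlinarith [le_abs_self (q * s)]
  have e2 : 1 - q * s ≠ 0 := ne_of_gt hD2
  have e3 : v - (1 - q) * s ≠ 0 := by rw [← hA]; exact ne_of_gt hD3
  have e5 : 1 - (1 - q) * s / v ≠ 0 := by rw [← hA]; exact ne_of_gt hD1
  have e1b : -1 + s * q ≠ 0 := fun h => e1 (by linarith)
  have e3b : -s + s * q + v ≠ 0 := fun h => e3 (by linarith)
  have hW : (q / v) * s - s / v + 1 = (v - (1 - q) * s) / v := by
    field_simp; ring
  have hW2 : 1 - (1 - q) * s / v = (v - (1 - q) * s) / v := by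
    field_simp
  have hT : (1 / v) * (s / ((q / v) * s - s / v + 1) + q * s / (q * s - 1)) =
      (s / v) * (1 - A * s / v)⁻¹ - (1 / v) * ((q * s) * (1 - q * s)⁻¹) := by
    rw [hA, hW, hW2, div_div_eq_mul_div, inv_div]
    field_simp [e1, e2, e3]
    ring_nf
    rw [show (1:ℝ) - s * q = -(-1 + s * q) by ring, inv_neg]
    ring
  constructor
  · rw [hT]
    have := G1.sub G2
    simpa only [hfun] using this
  · rw [hA, hW, div_div_eq_mul_div]
    field_simp [e1, e2, e3]
    ring_nf
    rw [show (1:ℝ) - s * q = -(-1 + s * q) by ring, inv_neg]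
    ring
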